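/- For the explicit piecewise linear density f one has f(x − a_{m_n}) ~ f(x) uniformly on the blocks (a_n, a_{n+1}]: for every ε > 0 there exists N such that for all n ≥ N and all x ∈ (a_n, a_{n+1}], |f(x − a_{m_n})/f(x) − 1| ≤ ε. -/

import Mathlib

open MeasureTheory Filter Set

noncomputable section

/-- `a_n = 2^(n²)`. -/
def aSeq (n : ℕ) : ℝ := 2 ^ (n ^ 2)

/-- `m_n` : the least positive integer `k` with `k ≥ (√5/√6)·n`. -/
def mIdx (n : ℕ) : ℕ := max 1 ⌈(Real.sqrt 5 / Real.sqrt 6) * (n : ℝ)⌉₊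

/-- `b_n = a_n + a_{m_n}·(ln (n+1))²`. -/
def bSeq (n : ℕ) : ℝ := aSeq n + aSeq (mIdx n) * (Real.log ((n : ℝ) + 1)) ^ 2

/-- `c_n = (a_{n+1} + b_n)/2`. -/
def cSeq (n : ℕ) : ℝ := (aSeq (n + 1) + bSeq n) / 2

/-- `f` is affine (the linear interpolation of its endpoint values) on `[p, q]`. -/
def AffineOnIcc (f : ℝ → ℝ) (p q : ℝ) : Prop :=
  ∀ x ∈ Set.Icc p q, f x = f p + (x - p) / (q - p) * (f q - f p)

/-- The explicit continuous piecewise linear construction `f₀ : [0,∞) → (0,∞)`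
with `f₀(0) = 1`, `f₀(a_n) = 2 a_n⁻³`, `f₀(b_n) = 2 a_n⁻³ / ln(n+1)`,
`f₀(c_n) = 2 a_n⁻³`, affine on `[0,a₁]`, `[a_n,b_n]`, `[b_n,c_n]`, `[c_n,a_{n+1}]`. -/
def PWConstruction (f₀ : ℝ → ℝ) : Prop :=
  ContinuousOn f₀ (Set.Ici 0) ∧
  (∀ x : ℝ, 0 ≤ x → 0 < f₀ x) ∧
  f₀ 0 = 1 ∧
  (∀ n : ℕ, 1 ≤ n →
    f₀ (aSeq n) = 2 / (aSeq n) ^ 3 ∧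
    f₀ (bSeq n) = 2 / (aSeq n) ^ 3 / Real.log ((n : ℝ) + 1) ∧
    f₀ (cSeq n) = 2 / (aSeq n) ^ 3) ∧
  AffineOnIcc f₀ 0 (aSeq 1) ∧
  (∀ n : ℕ, 1 ≤ n →
    AffineOnIcc f₀ (aSeq n) (bSeq n) ∧
    AffineOnIcc f₀ (bSeq n) (cSeq n) ∧
    AffineOnIcc f₀ (cSeq n) (aSeq (n + 1)))

/-- The normalized extension `f = f₀ / ∫₀^∞ f₀(y) dy`, extended by `0` on `(-∞,0)`. -/
def normExt (f₀ : ℝ → ℝ) : ℝ → ℝ :=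
  fun x => if x < 0 then 0 else f₀ x / ∫ y in Set.Ici (0:ℝ), f₀ y

lemma aSeq_pos (n : ℕ) : 0 < aSeq n := by unfold aSeq; positivity

lemma two_pow_mono {i j : ℕ} (h : i ≤ j) : (2:ℝ)^i ≤ 2^j :=
  pow_le_pow_right₀ one_le_two h

lemma aSeq_mono {k l : ℕ} (h : k ≤ l) : aSeq k ≤ aSeq l :=
  two_pow_mono (Nat.pow_le_pow_left h 2)

lemma log_n1_pos {n : ℕ} (hn : 1 ≤ n) : 0 < Real.log ((n:ℝ)+1) := by
  apply Real.log_pos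
  have : (1:ℝ) ≤ (n:ℝ) := by exact_mod_cast hn
  linarith

lemma log_n1_ge_one {n : ℕ} (hn : 2 ≤ n) : 1 ≤ Real.log ((n:ℝ)+1) := by
  have h3 : (3:ℝ) ≤ (n:ℝ)+1 := by
    have : (2:ℝ) ≤ (n:ℝ) := by exact_mod_cast hn
    linarith
  have he : Real.exp 1 ≤ 3 := by
    have := Real.exp_one_lt_d9; linarith
  calc (1:ℝ) = Real.log (Real.exp 1) := (Real.log_exp 1).symm
    _ ≤ Real.log 3 := Real.log_le_log (Real.exp_pos 1) he
    _ ≤ Real.log ((n:ℝ)+1) := Real.log_le_log (by norm_num) h3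

lemma log_n1_le {n : ℕ} : Real.log ((n:ℝ)+1) ≤ (n:ℝ) := by
  have := Real.log_le_sub_one_of_pos (x := (n:ℝ)+1) (by positivity)
  linarith

lemma nat_lt_two_pow_real (n : ℕ) : (n:ℝ) ≤ 2^n := by
  have := Nat.lt_two_pow_self (n := n)
  calc (n:ℝ) ≤ ((2^n : ℕ) : ℝ) := by exact_mod_cast this.le
    _ = 2^n := by push_cast; ring

lemma mIdx_le_self {n : ℕ} (hn : 1 ≤ n) : mIdx n ≤ n := by
  unfold mIdx
  have hα : Real.sqrt 5 / Real.sqrt 6 ≤ 1 := by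
    rw [div_le_one (Real.sqrt_pos.mpr (by norm_num))]
    exact Real.sqrt_le_sqrt (by norm_num)
  refine max_le hn (Nat.ceil_le.mpr ?_)
  calc Real.sqrt 5 / Real.sqrt 6 * n ≤ 1 * n := by
        apply mul_le_mul_of_nonneg_right hα (by positivity)
    _ = (n:ℝ) := by ring

lemma sqrt_ratio_le : Real.sqrt 5 / Real.sqrt 6 ≤ 59/63 := by
  rw [div_le_iff₀ (Real.sqrt_pos.mpr (by norm_num))]
  have : (59/63:ℝ) * Real.sqrt 6 = Real.sqrt ((59/63)^2 * 6) := by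
    rw [Real.sqrt_mul (by positivity), Real.sqrt_sq (by norm_num)]
  rw [this]
  exact Real.sqrt_le_sqrt (by norm_num)

lemma mIdx_le {n : ℕ} (hn : 63 ≤ n) : mIdx n ≤ n - 4 := by
  unfold mIdx
  have h1 : (1:ℕ) ≤ n - 4 := by omega
  refine max_le h1 (Nat.ceil_le.mpr ?_)
  have hc : ((n - 4 : ℕ) : ℝ) = (n:ℝ) - 4 := by
    have : (4:ℕ) ≤ n := by omega
    push_cast [Nat.cast_sub this]; ring
  rw [hc]
  have hn' : (63:ℝ) ≤ (n:ℝ) := by exact_mod_cast hn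
  calc Real.sqrt 5 / Real.sqrt 6 * n ≤ (59/63) * n := by
        apply mul_le_mul_of_nonneg_right sqrt_ratio_le (by positivity)
    _ ≤ (n:ℝ) - 4 := by nlinarith

-- affine lemmas
lemma affine_sub {f : ℝ → ℝ} {p q u v : ℝ} (h : AffineOnIcc f p q)
    (hu : u ∈ Set.Icc p q) (hv : v ∈ Set.Icc p q) :
    f v - f u = (v - u) / (q - p) * (f q - f p) := by
  rw [h u hu, h v hv]; ring

lemma affine_lb {f : ℝ → ℝ} {p q x : ℝ} (h : AffineOnIcc f p q) (hpq : p < q)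
    (hx : x ∈ Set.Icc p q) : min (f p) (f q) ≤ f x := by
  have hf := h x hx
  have ht0 : 0 ≤ (x - p)/(q - p) := div_nonneg (by linarith [hx.1]) (by linarith)
  have ht1 : (x - p)/(q - p) ≤ 1 := by
    rw [div_le_one (by linarith)]; linarith [hx.2]
  rcases le_total (f p) (f q) with hle | hle
  · rw [min_eq_left hle, hf]; nlinarith
  · rw [min_eq_right hle, hf]; nlinarith

lemma affine_ub {f : ℝ → ℝ} {p q x : ℝ} (h : AffineOnIcc f p q) (hpq : p < q)
    (hx : x ∈ Set.Icc p q) : f x ≤ max (f p) (f q) := by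
  have hf := h x hx
  have ht0 : 0 ≤ (x - p)/(q - p) := div_nonneg (by linarith [hx.1]) (by linarith)
  have ht1 : (x - p)/(q - p) ≤ 1 := by
    rw [div_le_one (by linarith)]; linarith [hx.2]
  rcases le_total (f p) (f q) with hle | hle
  · rw [max_eq_right hle, hf]; nlinarith
  · rw [max_eq_left hle, hf]; nlinarith

lemma lip_of_affine {f : ℝ → ℝ} {p q K : ℝ} (h : AffineOnIcc f p q) (hpq : p < q)
    (hK : |f q - f p| ≤ K * (q - p)) :
    ∀ u ∈ Set.Icc p q, ∀ v ∈ Set.Icc p q, |f v - f u| ≤ K * |v - u| := by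
  intro u hu v hv
  rw [affine_sub h hu hv, abs_mul, abs_div, abs_of_pos (by linarith : (0:ℝ) < q - p)]
  rw [div_mul_eq_mul_div, div_le_iff₀ (by linarith : (0:ℝ) < q - p)]
  calc |v - u| * |f q - f p| ≤ |v - u| * (K * (q - p)) :=
        mul_le_mul_of_nonneg_left hK (abs_nonneg _)
    _ = K * |v - u| * (q - p) := by ring

lemma lip_glue {f : ℝ → ℝ} {a b c K : ℝ} (hab : a ≤ b) (hbc : b ≤ c)
    (h1 : ∀ u ∈ Set.Icc a b, ∀ v ∈ Set.Icc a b, |f v - f u| ≤ K * |v - u|)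
    (h2 : ∀ u ∈ Set.Icc b c, ∀ v ∈ Set.Icc b c, |f v - f u| ≤ K * |v - u|) :
    ∀ u ∈ Set.Icc a c, ∀ v ∈ Set.Icc a c, |f v - f u| ≤ K * |v - u| := by
  have key : ∀ u ∈ Set.Icc a c, ∀ v ∈ Set.Icc a c, u ≤ v → |f v - f u| ≤ K * |v - u| := by
    intro u hu v hv huv
    rcases le_total v b with hvb | hbv
    · exact h1 u ⟨hu.1, le_trans huv hvb⟩ v ⟨hv.1, hvb⟩
    · rcases le_total b u with hbu | hub
      · exact h2 u ⟨hbu, le_trans huv hv.2⟩ v ⟨le_trans hbu huv, hv.2⟩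
      · have e1 := h1 u ⟨hu.1, hub⟩ b ⟨hab, le_refl b⟩
        have e2 := h2 b ⟨le_refl b, hbc⟩ v ⟨hbv, hv.2⟩
        have : |f v - f u| ≤ |f b - f u| + |f v - f b| := by
          have := abs_add_le (f b - f u) (f v - f b)
          simpa [sub_add_sub_cancel'] using abs_sub_le (f v) (f b) (f u) |>.trans (by rw [add_comm])
        calc |f v - f u| ≤ |f b - f u| + |f v - f b| := this
          _ ≤ K * |b - u| + K * |v - b| := add_le_add e1 e2
          _ = K * (b - u) + K * (v - b) := by
              rw [abs_of_nonneg (by linarith), abs_of_nonneg (by linarith)]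
          _ = K * (v - u) := by ring
          _ = K * |v - u| := by rw [abs_of_nonneg (by linarith)]
  intro u hu v hv
  rcases le_total u v with h | h
  · exact key u hu v hv h
  · rw [abs_sub_comm (f v), abs_sub_comm v]; exact key v hv u hu h


lemma one_add_sq_le (n : ℕ) (hn : 1 ≤ n) : (1:ℝ) + (n:ℝ)^2 ≤ 2^(2*n) := by
  have h1 : n + 1 ≤ 2^n := Nat.lt_two_pow_self (n := n)
  have h2 : 1 + n^2 ≤ 2^(2*n) := by
    calc 1 + n^2 ≤ (n+1)^2 := by nlinarith
      _ ≤ (2^n)^2 := Nat.pow_le_pow_left h1 2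
      _ = 2^(2*n) := by rw [← pow_mul, mul_comm]
  calc (1:ℝ) + (n:ℝ)^2 = ((1 + n^2 : ℕ) : ℝ) := by push_cast; ring
    _ ≤ ((2^(2*n) : ℕ) : ℝ) := by exact_mod_cast h2
    _ = 2^(2*n) := by push_cast; ring

lemma aSeq_succ (n : ℕ) : aSeq (n+1) = aSeq n * 2^(2*n) * 2 := by
  unfold aSeq
  rw [show (n+1)^2 = n^2 + 2*n + 1 by ring, pow_add, pow_add, pow_one]

lemma bSeq_le_half {n : ℕ} (hn : 1 ≤ n) : bSeq n ≤ aSeq (n+1) / 2 := by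
  have hm : aSeq (mIdx n) ≤ aSeq n := aSeq_mono (mIdx_le_self hn)
  have hL : Real.log ((n:ℝ)+1) ^ 2 ≤ (n:ℝ)^2 := by
    have h1 := log_n1_pos hn
    have h2 := log_n1_le (n := n)
    nlinarith
  have h0 : 0 ≤ Real.log ((n:ℝ)+1) ^ 2 := sq_nonneg _
  have : bSeq n ≤ aSeq n * (1 + (n:ℝ)^2) := by
    unfold bSeq
    have := mul_le_mul hm hL h0 (aSeq_pos n).le
    nlinarith [aSeq_pos n, aSeq_pos (mIdx n)]
  calc bSeq n ≤ aSeq n * (1 + (n:ℝ)^2) := this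
    _ ≤ aSeq n * 2^(2*n) := by
        exact mul_le_mul_of_nonneg_left (one_add_sq_le n hn) (aSeq_pos n).le
    _ = aSeq (n+1) / 2 := by rw [aSeq_succ]; ring

lemma a_lt_b {n : ℕ} (hn : 1 ≤ n) : aSeq n < bSeq n := by
  unfold bSeq
  nlinarith [mul_pos (aSeq_pos (mIdx n)) (pow_pos (log_n1_pos hn) 2)]

lemma b_lt_c {n : ℕ} (hn : 1 ≤ n) : bSeq n < cSeq n := by
  have h1 := bSeq_le_half hn
  have h2 := aSeq_pos (n+1)
  unfold cSeq; linarith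

lemma c_lt_a {n : ℕ} (hn : 1 ≤ n) : cSeq n < aSeq (n+1) := by
  have h1 := bSeq_le_half hn
  have h2 := aSeq_pos (n+1)
  unfold cSeq; linarith

lemma c_sub_b {n : ℕ} (hn : 1 ≤ n) : aSeq (n+1)/4 ≤ cSeq n - bSeq n := by
  have h1 := bSeq_le_half hn
  unfold cSeq; linarith

lemma a_sub_c {n : ℕ} (hn : 1 ≤ n) : aSeq (n+1)/4 ≤ aSeq (n+1) - cSeq n := by
  have h1 := bSeq_le_half hn
  unfold cSeq; linarith

lemma f0_block_ub (f₀ : ℝ → ℝ) (hf₀ : PWConstruction f₀) {n : ℕ} (hn : 1 ≤ n)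
    {x : ℝ} (hx : x ∈ Set.Icc (aSeq n) (aSeq (n+1))) : f₀ x ≤ 4 / aSeq n ^ 3 := by
  obtain ⟨hcont, hpos, h0, hvals, haff0, haffs⟩ := hf₀
  obtain ⟨hva, hvb, hvc⟩ := hvals n hn
  obtain ⟨haf1, haf2, haf3⟩ := haffs n hn
  have hL : (1:ℝ)/2 ≤ Real.log ((n:ℝ)+1) := by
    have : (0.6931471803 : ℝ) < Real.log 2 := Real.log_two_gt_d9
    have h2 : Real.log 2 ≤ Real.log ((n:ℝ)+1) := by
      apply Real.log_le_log (by norm_num)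
      have : (1:ℝ) ≤ (n:ℝ) := by exact_mod_cast hn
      linarith
    linarith
  have hLpos := log_n1_pos hn
  have hapos := aSeq_pos n
  have ha1pos := aSeq_pos (n+1)
  have hP : (0:ℝ) < aSeq n ^ 3 := by positivity
  have hb_ub : f₀ (bSeq n) ≤ 4 / aSeq n ^ 3 := by
    rw [hvb, div_le_iff₀ hLpos]
    calc 2 / aSeq n ^ 3 = 4 / aSeq n ^ 3 * (1/2) := by ring
      _ ≤ 4 / aSeq n ^ 3 * Real.log ((n:ℝ)+1) := by
          apply mul_le_mul_of_nonneg_left hL (by positivity)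
  have ha_ub : f₀ (aSeq n) ≤ 4 / aSeq n ^ 3 := by
    rw [hva, div_le_div_iff₀ hP hP]; nlinarith
  have hc_ub : f₀ (cSeq n) ≤ 4 / aSeq n ^ 3 := by
    rw [hvc, div_le_div_iff₀ hP hP]; nlinarith
  have ha1_ub : f₀ (aSeq (n+1)) ≤ 4 / aSeq n ^ 3 := by
    rw [(hvals (n+1) (by omega)).1]
    have h1 : aSeq n ^ 3 ≤ aSeq (n+1) ^ 3 := by
      apply pow_le_pow_left₀ hapos.le (aSeq_mono (by omega))
    rw [div_le_div_iff₀ (by positivity) hP]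
    nlinarith [pow_pos ha1pos 3]
  rcases le_or_gt x (bSeq n) with h1 | h1
  · exact (affine_ub haf1 (a_lt_b hn) ⟨hx.1, h1⟩).trans (max_le ha_ub hb_ub)
  rcases le_or_gt x (cSeq n) with h2 | h2
  · exact (affine_ub haf2 (b_lt_c hn) ⟨h1.le, h2⟩).trans (max_le hb_ub hc_ub)
  · exact (affine_ub haf3 (c_lt_a hn) ⟨h2.le, hx.2⟩).trans (max_le hc_ub ha1_ub)

lemma nat_le_aSeq (j : ℕ) : (j:ℝ) ≤ aSeq j := by
  calc (j:ℝ) ≤ 2^j := nat_lt_two_pow_real j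
    _ ≤ aSeq j := two_pow_mono (Nat.le_self_pow two_ne_zero j)

lemma exists_block {x : ℝ} {k : ℕ} (hx : aSeq k ≤ x) :
    ∃ n, k ≤ n ∧ x ∈ Set.Icc (aSeq n) (aSeq (n+1)) := by
  classical
  set P : ℕ → Prop := fun n => aSeq n ≤ x with hP
  have hx0 : 0 ≤ x := le_trans (aSeq_pos k).le hx
  set B : ℕ := ⌈x⌉₊ with hB
  have hle : ∀ j, P j → j ≤ B := by
    intro j hj
    have : (j:ℝ) ≤ x := le_trans (nat_le_aSeq j) hj
    exact_mod_cast this.trans (Nat.le_ceil x)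
  have hkB : k ≤ B := hle k hx
  have hspec : P (Nat.findGreatest P B) := Nat.findGreatest_spec hkB hx
  refine ⟨Nat.findGreatest P B, Nat.le_findGreatest hkB hx, hspec, ?_⟩
  by_contra hcon
  push_neg at hcon
  have hP1 : P (Nat.findGreatest P B + 1) := le_of_lt hcon
  exact Nat.findGreatest_is_greatest (Nat.lt_succ_self _) (hle _ hP1) hP1

lemma integrableOn_f0 (f₀ : ℝ → ℝ) (hf₀ : PWConstruction f₀) :
    IntegrableOn f₀ (Set.Ici (0:ℝ)) := by
  obtain ⟨hcont, hpos, h0, hvals, haff0, haffs⟩ := hf₀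
  have ha5 : (0:ℝ) ≤ aSeq 5 := (aSeq_pos 5).le
  rw [← Set.Icc_union_Ioi_eq_Ici ha5]
  apply MeasureTheory.IntegrableOn.union
  · exact ContinuousOn.integrableOn_compact isCompact_Icc
      (hcont.mono (fun y hy => hy.1))
  · apply MeasureTheory.Integrable.mono'
      (g := fun x => 4 * x ^ (-2:ℝ))
      ((integrableOn_Ioi_rpow_of_lt (by norm_num) (aSeq_pos 5)).const_mul 4)
      ((hcont.mono (fun y (hy : y ∈ Set.Ioi (aSeq 5)) =>
        le_trans ha5 (le_of_lt hy))).aestronglyMeasurable measurableSet_Ioi)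
    filter_upwards [ae_restrict_mem measurableSet_Ioi] with y hy
    have hy5 : aSeq 5 ≤ y := (le_of_lt hy)
    have hy0 : (0:ℝ) < y := lt_of_lt_of_le (aSeq_pos 5) hy5
    obtain ⟨n, hn5, hyn⟩ := exists_block hy5
    have hub : f₀ y ≤ 4 / aSeq n ^ 3 :=
      f0_block_ub f₀ ⟨hcont, hpos, h0, hvals, haff0, haffs⟩ (by omega) hyn
    have hsq : y^2 ≤ aSeq n ^ 3 := by
      have h1 : y ≤ aSeq (n+1) := hyn.2
      have h2 : aSeq (n+1)^2 ≤ aSeq n ^ 3 := by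
        unfold aSeq
        rw [← pow_mul, ← pow_mul]
        apply two_pow_mono
        obtain ⟨d, rfl⟩ : ∃ d, n = d + 5 := ⟨n - 5, by omega⟩
        nlinarith
      calc y^2 ≤ aSeq (n+1)^2 := by nlinarith [aSeq_pos (n+1)]
        _ ≤ aSeq n ^ 3 := h2
    have hrp : y ^ (-2:ℝ) = (y^2)⁻¹ := by
      rw [Real.rpow_neg hy0.le, show (2:ℝ) = ((2:ℕ):ℝ) by norm_num, Real.rpow_natCast]
    rw [Real.norm_eq_abs, abs_of_pos (hpos y hy0.le), hrp]
    calc f₀ y ≤ 4 / aSeq n ^ 3 := hub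
      _ ≤ 4 / y^2 := div_le_div_of_nonneg_left (by norm_num) (by positivity) hsq
      _ = 4 * (y^2)⁻¹ := by ring

lemma integral_f0_pos (f₀ : ℝ → ℝ) (hf₀ : PWConstruction f₀) :
    0 < ∫ y in Set.Ici (0:ℝ), f₀ y := by
  have hint := integrableOn_f0 f₀ hf₀
  obtain ⟨hcont, hpos, _⟩ := hf₀
  rw [MeasureTheory.setIntegral_pos_iff_support_of_nonneg_ae ?_ hint]
  · have hsub : Set.Icc (0:ℝ) 1 ⊆ Function.support f₀ ∩ Set.Ici 0 := by
      intro y hy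
      exact ⟨(hpos y hy.1).ne', hy.1⟩
    calc (0:ENNReal) < volume (Set.Icc (0:ℝ) 1) := by
          rw [Real.volume_Icc]; norm_num
      _ ≤ volume (Function.support f₀ ∩ Set.Ici 0) := measure_mono hsub
  · filter_upwards [ae_restrict_mem measurableSet_Ici] with y hy
    exact (hpos y hy).le



lemma aSeq_pow_eq (n j : ℕ) : aSeq n ^ j = 2 ^ (j * n^2) := by
  unfold aSeq; rw [← pow_mul, Nat.mul_comm]



lemma expo1 (d : ℕ) : 2 + ((d+59)^2 + (2*(d+63)^2 + ((d+63) + (d+63)))) ≤ 15 + 3*(d+62)^2 := by nlinarith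
lemma expo2 (d : ℕ) : 2 + ((d+63) + ((d+59)^2 + (d+63))) ≤ 15 + (d+64)^2 := by nlinarith
lemma expo3 (d : ℕ) : 3 + (2*(d+64)^2 + ((d+63) + (d+59)^2)) ≤ 16 + 3*(d+63)^2 := by nlinarith
lemma expo4 (M d : ℕ) (h : M ≤ d + 59) : M^2 + 2 ≤ (d+63)^2 := by nlinarith

set_option maxHeartbeats 2000000 in
lemma key_bound (f₀ : ℝ → ℝ) (hf₀ : PWConstruction f₀) (k : ℕ) (hk : 62 ≤ k)
    {x : ℝ} (hx : x ∈ Set.Ioc (aSeq (k+1)) (aSeq (k+2))) :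
    |f₀ (x - aSeq (mIdx (k+1))) / f₀ x - 1| ≤
      1 / Real.log ((k+1 : ℕ) + 1) + 2^16 / 2^(k+1) := by
  obtain ⟨hcont, hpos, h0, hvals, haff0, haffs⟩ := hf₀
  obtain ⟨d, rfl⟩ : ∃ d, k = d + 62 := ⟨k - 62, by omega⟩
  have e1 : d + 62 + 1 = d + 63 := rfl
  have e2 : d + 62 + 2 = d + 64 := rfl
  rw [e1, e2] at hx
  rw [e1]
  set M := mIdx (d+63) with hM
  set s := aSeq M with hs
  set L := Real.log (((d+63:ℕ) : ℝ) + 1) with hL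
  have hMk : M ≤ d + 59 := by have := mIdx_le (n := d+63) (by omega); omega
  clear_value M
  clear_value s
  clear_value L
  have hM2' : M^2 ≤ (d+59)^2 := Nat.pow_le_pow_left hMk 2
  -- positivity facts
  have hapos := aSeq_pos (d+63)
  have ha0pos := aSeq_pos (d+62)
  have ha'pos := aSeq_pos (d+64)
  have hspos : (0:ℝ) < s := by rw [hs]; exact aSeq_pos M
  have hLpos : 0 < L := by rw [hL]; exact log_n1_pos (n := d+63) (by omega)
  have hL1 : 1 ≤ L := by rw [hL]; exact log_n1_ge_one (n := d+63) (by omega)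
  have hLle : L ≤ ((d+63:ℕ):ℝ) := by rw [hL]; exact log_n1_le (n := d+63)
  have hA3 : (0:ℝ) < aSeq (d+63)^3 := pow_pos hapos 3
  have hA03 : (0:ℝ) < aSeq (d+62)^3 := pow_pos ha0pos 3
  have hA'3 : (0:ℝ) < aSeq (d+64)^3 := pow_pos ha'pos 3
  have hsL : (0:ℝ) < s * L^2 := mul_pos hspos (pow_pos hLpos 2)
  have hAne : aSeq (d+63) ≠ 0 := ne_of_gt hapos
  have hA0ne : aSeq (d+62) ≠ 0 := ne_of_gt ha0pos
  have hA'ne : aSeq (d+64) ≠ 0 := ne_of_gt ha'pos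
  have hsne : s ≠ 0 := ne_of_gt hspos
  have hLne : L ≠ 0 := ne_of_gt hLpos
  have h2A : (0:ℝ) < 2 / aSeq (d+63)^3 := div_pos (by norm_num) hA3
  have h2AL : (0:ℝ) < 2 / aSeq (d+63)^3 / L := div_pos h2A hLpos
  have h2pow : ∀ j : ℕ, (0:ℝ) < 2^j := fun j => pow_pos two_pos j
  -- values
  obtain ⟨hva, hvb, hvc⟩ := hvals (d+63) (by omega)
  rw [← hL] at hvb
  obtain ⟨hva0, hvb0, hvc0⟩ := hvals (d+62) (by omega)
  obtain ⟨hva', -, -⟩ := hvals (d+64) (by omega)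
  obtain ⟨haf1, haf2, haf3⟩ := haffs (d+63) (by omega)
  obtain ⟨-, -, haf0⟩ := haffs (d+62) (by omega)
  rw [show d + 62 + 1 = d + 63 from rfl] at haf0
  rw [show d + 63 + 1 = d + 64 from rfl] at haf3
  -- geometry
  have hbh : bSeq (d+63) ≤ aSeq (d+64) / 2 := bSeq_le_half (n := d+63) (by omega)
  have hbh0 : bSeq (d+62) ≤ aSeq (d+63) / 2 := bSeq_le_half (n := d+62) (by omega)
  have hc0le : cSeq (d+62) ≤ 3 * aSeq (d+63) / 4 := by
    unfold cSeq; rw [e1]; linarith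
  have hac0 : aSeq (d+63) / 4 ≤ aSeq (d+63) - cSeq (d+62) := by
    unfold cSeq; rw [e1]; linarith
  have hc0a : cSeq (d+62) < aSeq (d+63) := by linarith
  have hab : aSeq (d+63) < bSeq (d+63) := a_lt_b (by omega)
  have hbc : bSeq (d+63) < cSeq (d+63) := b_lt_c (by omega)
  have hca' : cSeq (d+63) < aSeq (d+64) := c_lt_a (n := d+63) (by omega)
  have hcb : aSeq (d+64)/4 ≤ cSeq (d+63) - bSeq (d+63) := c_sub_b (n := d+63) (by omega)
  have hac' : aSeq (d+64)/4 ≤ aSeq (d+64) - cSeq (d+63) := a_sub_c (n := d+63) (by omega)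
  have hba : bSeq (d+63) - aSeq (d+63) = s * L^2 := by
    unfold bSeq; rw [hs, hL, hM]; push_cast; ring
  have h4s : 4 * s ≤ aSeq (d+63) := by
    have hexp : M^2 + 2 ≤ (d+63)^2 := expo4 M d hMk
    calc 4 * s = 2^(M^2 + 2) := by rw [hs]; unfold aSeq; rw [pow_add]; ring
      _ ≤ 2^((d+63)^2) := two_pow_mono hexp
      _ = aSeq (d+63) := rfl
  have haa' : aSeq (d+63) ≤ aSeq (d+64) := aSeq_mono (by omega)
  have hsa'4 : s ≤ aSeq (d+64) / 4 := by linarith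
  have hxa : aSeq (d+63) < x := hx.1
  have hx0 : (0:ℝ) < x := lt_trans hapos hxa
  have hfx : 0 < f₀ x := hpos x hx0.le
  have hs_ub : s ≤ (2:ℝ)^((d+59)^2) := by rw [hs]; exact two_pow_mono hM2'
  have hLpow : L ≤ (2:ℝ)^(d+63) := le_trans hLle (nat_lt_two_pow_real _)
  have hfb_le_fa : 2 / aSeq (d+63)^3 / L ≤ 2 / aSeq (d+63)^3 :=
    div_le_self h2A.le hL1
  have hratio : f₀ (x - s) / f₀ x - 1 = (f₀ (x - s) - f₀ x) / f₀ x := by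
    field_simp
  rw [hratio, abs_div, abs_of_pos hfx]
  have habs_ab : |f₀ (bSeq (d+63)) - f₀ (aSeq (d+63))| ≤ 2 / aSeq (d+63)^3 := by
    rw [hvb, hva, abs_of_nonpos (by linarith)]; linarith
  have habs_bc : |f₀ (cSeq (d+63)) - f₀ (bSeq (d+63))| ≤ 2 / aSeq (d+63)^3 := by
    rw [hvc, hvb, abs_of_nonneg (by linarith)]; linarith
  rcases le_or_gt x (cSeq (d+63)) with hxc | hxc
  · -- CASE A : x ∈ (a, c]
    set K : ℝ := 8/(aSeq (d+62)^3 * aSeq (d+63)) + 2/(aSeq (d+63)^3 * (s * L^2))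
        + 8/(aSeq (d+63)^3 * aSeq (d+64)) with hKdef
    clear_value K
    have ht1 : (0:ℝ) < 8/(aSeq (d+62)^3 * aSeq (d+63)) :=
      div_pos (by norm_num) (mul_pos hA03 hapos)
    have ht2 : (0:ℝ) < 2/(aSeq (d+63)^3 * (s * L^2)) :=
      div_pos (by norm_num) (mul_pos hA3 hsL)
    have ht3 : (0:ℝ) < 8/(aSeq (d+63)^3 * aSeq (d+64)) :=
      div_pos (by norm_num) (mul_pos hA3 ha'pos)
    have hKpos : 0 < K := by rw [hKdef]; linarith
    -- piece 0 : [c₀, a]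
    have hK0 : |f₀ (aSeq (d+63)) - f₀ (cSeq (d+62))| ≤ K * (aSeq (d+63) - cSeq (d+62)) := by
      rw [hva, hvc0]
      have h1 : 2/aSeq (d+63)^3 ≤ 2/aSeq (d+62)^3 :=
        div_le_div_of_nonneg_left (by norm_num) hA03
          (pow_le_pow_left₀ ha0pos.le (aSeq_mono (by omega)) 3)
      rw [abs_of_nonpos (by linarith)]
      have heq : 2/aSeq (d+62)^3 = 8/(aSeq (d+62)^3 * aSeq (d+63)) * (aSeq (d+63)/4) := by
        rw [div_mul_div_comm, div_eq_div_iff hA03.ne' (ne_of_gt (mul_pos (mul_pos hA03 hapos) (by norm_num : (0:ℝ) < 4)))]; ring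
      calc -(2/aSeq (d+63)^3 - 2/aSeq (d+62)^3) ≤ 2/aSeq (d+62)^3 := by linarith
        _ = 8/(aSeq (d+62)^3 * aSeq (d+63)) * (aSeq (d+63)/4) := heq
        _ ≤ K * (aSeq (d+63) - cSeq (d+62)) := by
            apply mul_le_mul (by rw [hKdef]; linarith) hac0 (by linarith) hKpos.le
    -- piece 1 : [a, b]
    have hK1 : |f₀ (bSeq (d+63)) - f₀ (aSeq (d+63))| ≤ K * (bSeq (d+63) - aSeq (d+63)) := by
      rw [hba]
      have heq : 2/aSeq (d+63)^3 = 2/(aSeq (d+63)^3 * (s * L^2)) * (s * L^2) := by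
        rw [← div_div, div_mul_cancel₀ _ (ne_of_gt hsL)]
      calc |f₀ (bSeq (d+63)) - f₀ (aSeq (d+63))| ≤ 2 / aSeq (d+63)^3 := habs_ab
        _ = 2/(aSeq (d+63)^3 * (s * L^2)) * (s * L^2) := heq
        _ ≤ K * (s * L^2) := mul_le_mul_of_nonneg_right (by rw [hKdef]; linarith) hsL.le
    -- piece 2 : [b, c]
    have hK2 : |f₀ (cSeq (d+63)) - f₀ (bSeq (d+63))| ≤ K * (cSeq (d+63) - bSeq (d+63)) := by
      have heq : 2/aSeq (d+63)^3 = 8/(aSeq (d+63)^3 * aSeq (d+64)) * (aSeq (d+64)/4) := by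
        rw [div_mul_div_comm, div_eq_div_iff hA3.ne' (ne_of_gt (mul_pos (mul_pos hA3 ha'pos) (by norm_num : (0:ℝ) < 4)))]; ring
      calc |f₀ (cSeq (d+63)) - f₀ (bSeq (d+63))| ≤ 2 / aSeq (d+63)^3 := habs_bc
        _ = 8/(aSeq (d+63)^3 * aSeq (d+64)) * (aSeq (d+64)/4) := heq
        _ ≤ K * (cSeq (d+63) - bSeq (d+63)) := by
            apply mul_le_mul (by rw [hKdef]; linarith) hcb (by linarith) hKpos.le
    -- glue
    have lip0 := lip_of_affine haf0 hc0a hK0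
    have lip1 := lip_of_affine haf1 hab hK1
    have lip2 := lip_of_affine haf2 hbc hK2
    have g1 := lip_glue hc0a.le hab.le lip0 lip1
    have g2 := lip_glue (le_trans hc0a.le hab.le) hbc.le g1 lip2
    have hxm : x ∈ Set.Icc (cSeq (d+62)) (cSeq (d+63)) := ⟨by linarith, hxc⟩
    have hxsm : x - s ∈ Set.Icc (cSeq (d+62)) (cSeq (d+63)) :=
      ⟨by linarith, by linarith⟩
    have hdelta : |f₀ (x - s) - f₀ x| ≤ K * s := by
      have := g2 x hxm (x - s) hxsm
      rw [show x - s - x = -s by ring, abs_neg, abs_of_pos hspos] at this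
      exact this
    have flb : 2 / aSeq (d+63)^3 / L ≤ f₀ x := by
      rcases le_or_gt x (bSeq (d+63)) with h | h
      · refine le_trans (le_min ?_ ?_) (affine_lb haf1 hab ⟨hxa.le, h⟩)
        · rw [hva]; exact hfb_le_fa
        · rw [hvb]
      · refine le_trans (le_min ?_ ?_) (affine_lb haf2 hbc ⟨h.le, hxc⟩)
        · rw [hvb]
        · rw [hvc]; exact hfb_le_fa
    have step1 : |f₀ (x - s) - f₀ x| / f₀ x ≤ (K * s) / (2 / aSeq (d+63)^3 / L) :=
      div_le_div₀ (mul_pos hKpos hspos).le hdelta h2AL flb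
    have expand : (K * s) / (2 / aSeq (d+63)^3 / L) =
        4*s*aSeq (d+63)^2*L/aSeq (d+62)^3 + 1/L + 4*s*L/aSeq (d+64) := by
      rw [hKdef]; field_simp; ring
    have P1 : 4*s*aSeq (d+63)^2*L/aSeq (d+62)^3 ≤ 2^15/2^(d+63) := by
      rw [div_le_div_iff₀ hA03 (h2pow (d+63))]
      have ha2 : aSeq (d+63)^2 = (2:ℝ)^(2*(d+63)^2) := aSeq_pow_eq _ 2
      have ha03 : aSeq (d+62)^3 = (2:ℝ)^(3*(d+62)^2) := aSeq_pow_eq _ 3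
      rw [ha2, ha03]
      have hC : (0:ℝ) < 4*(2:ℝ)^(2*(d+63)^2)*2^(d+63) :=
        mul_pos (mul_pos (by norm_num) (h2pow _)) (h2pow _)
      calc 4*s*(2:ℝ)^(2*(d+63)^2)*L*2^(d+63)
          = (4*(2:ℝ)^(2*(d+63)^2)*2^(d+63)) * s * L := by ring
        _ ≤ (4*(2:ℝ)^(2*(d+63)^2)*2^(d+63)) * (2:ℝ)^((d+59)^2) * L := by
            exact mul_le_mul_of_nonneg_right
              (mul_le_mul_of_nonneg_left hs_ub hC.le) hLpos.le
        _ ≤ (4*(2:ℝ)^(2*(d+63)^2)*2^(d+63)) * (2:ℝ)^((d+59)^2) * 2^(d+63) := by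
            exact mul_le_mul_of_nonneg_left hLpow
              (mul_pos hC (h2pow _)).le
        _ = 2^(2 + ((d+59)^2 + (2*(d+63)^2 + ((d+63) + (d+63))))) := by
            rw [show (4:ℝ) = 2^2 by norm_num, pow_add, pow_add, pow_add, pow_add]; ring
        _ ≤ 2^(15 + 3*(d+62)^2) := two_pow_mono (expo1 d)
        _ = 2^15 * (2:ℝ)^(3*(d+62)^2) := by rw [pow_add]
    have P2 : 4*s*L/aSeq (d+64) ≤ 2^15/2^(d+63) := by
      rw [div_le_div_iff₀ ha'pos (h2pow (d+63))]
      have ha' : aSeq (d+64) = (2:ℝ)^((d+64)^2) := rfl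
      rw [ha']
      have hC : (0:ℝ) < 4*(2:ℝ)^(d+63) := mul_pos (by norm_num) (h2pow _)
      calc 4*s*L*2^(d+63)
          = (4*(2:ℝ)^(d+63)) * s * L := by ring
        _ ≤ (4*(2:ℝ)^(d+63)) * (2:ℝ)^((d+59)^2) * L :=
            mul_le_mul_of_nonneg_right (mul_le_mul_of_nonneg_left hs_ub hC.le) hLpos.le
        _ ≤ (4*(2:ℝ)^(d+63)) * (2:ℝ)^((d+59)^2) * 2^(d+63) :=
            mul_le_mul_of_nonneg_left hLpow (mul_pos hC (h2pow _)).le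
        _ = 2^(2 + ((d+63) + ((d+59)^2 + (d+63)))) := by
            rw [show (4:ℝ) = 2^2 by norm_num]; simp only [← pow_add]; congr 1; ring
        _ ≤ 2^(15 + (d+64)^2) := two_pow_mono (expo2 d)
        _ = 2^15 * (2:ℝ)^((d+64)^2) := by rw [pow_add]
    have hsum : (2:ℝ)^15/2^(d+63) + 2^15/2^(d+63) = 2^16/2^(d+63) := by
      rw [← add_div]; norm_num
    calc |f₀ (x - s) - f₀ x| / f₀ x ≤ (K * s) / (2 / aSeq (d+63)^3 / L) := step1
      _ = 4*s*aSeq (d+63)^2*L/aSeq (d+62)^3 + 1/L + 4*s*L/aSeq (d+64) := expand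
      _ ≤ 2^15/2^(d+63) + 1/L + 2^15/2^(d+63) := by linarith
      _ = 1/L + 2^16/2^(d+63) := by linarith
  · -- CASE B : x ∈ (c, a']
    set K : ℝ := 16/(aSeq (d+63)^3 * aSeq (d+64)) with hKdef
    clear_value K
    have hKpos : 0 < K := by
      rw [hKdef]; exact div_pos (by norm_num) (mul_pos hA3 ha'pos)
    have heqK : K * (aSeq (d+64)/4) = 4/(aSeq (d+63)^3) := by
      rw [hKdef, div_mul_div_comm, div_eq_div_iff (ne_of_gt (mul_pos (mul_pos hA3 ha'pos) (by norm_num : (0:ℝ) < 4))) hA3.ne']; ring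
    have h4A : (0:ℝ) < 4 / aSeq (d+63)^3 := div_pos (by norm_num) hA3
    have h24 : 4/aSeq (d+63)^3 = 2*(2/aSeq (d+63)^3) := by ring
    have hK2 : |f₀ (cSeq (d+63)) - f₀ (bSeq (d+63))| ≤ K * (cSeq (d+63) - bSeq (d+63)) := by
      calc |f₀ (cSeq (d+63)) - f₀ (bSeq (d+63))| ≤ 2 / aSeq (d+63)^3 := habs_bc
        _ ≤ K * (aSeq (d+64)/4) := by rw [heqK]; linarith [h24, h2A]
        _ ≤ K * (cSeq (d+63) - bSeq (d+63)) := mul_le_mul_of_nonneg_left hcb hKpos.le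
    have hK3 : |f₀ (aSeq (d+64)) - f₀ (cSeq (d+63))| ≤ K * (aSeq (d+64) - cSeq (d+63)) := by
      rw [hva', hvc]
      have h1 : 2/aSeq (d+64)^3 ≤ 2/aSeq (d+63)^3 :=
        div_le_div_of_nonneg_left (by norm_num) hA3
          (pow_le_pow_left₀ hapos.le haa' 3)
      have h2 : (0:ℝ) < 2/aSeq (d+64)^3 := div_pos (by norm_num) hA'3
      rw [abs_of_nonpos (by linarith)]
      calc -(2/aSeq (d+64)^3 - 2/aSeq (d+63)^3) ≤ 2/aSeq (d+63)^3 := by linarith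
        _ ≤ K * (aSeq (d+64)/4) := by rw [heqK]; linarith [h24, h2A]
        _ ≤ K * (aSeq (d+64) - cSeq (d+63)) := mul_le_mul_of_nonneg_left hac' hKpos.le
    have lip2 := lip_of_affine haf2 hbc hK2
    have lip3 := lip_of_affine haf3 hca' hK3
    have g2 := lip_glue hbc.le hca'.le lip2 lip3
    have hxm : x ∈ Set.Icc (bSeq (d+63)) (aSeq (d+64)) := ⟨by linarith, hx.2⟩
    have hxsm : x - s ∈ Set.Icc (bSeq (d+63)) (aSeq (d+64)) := ⟨by linarith, by linarith [hx.2]⟩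
    have hdelta : |f₀ (x - s) - f₀ x| ≤ K * s := by
      have := g2 x hxm (x - s) hxsm
      rw [show x - s - x = -s by ring, abs_neg, abs_of_pos hspos] at this
      exact this
    have h2A' : (0:ℝ) < 2 / aSeq (d+64)^3 := div_pos (by norm_num) hA'3
    have flb : 2 / aSeq (d+64)^3 ≤ f₀ x := by
      refine le_trans (le_min ?_ ?_) (affine_lb haf3 hca' ⟨hxc.le, hx.2⟩)
      · rw [hvc]
        exact div_le_div_of_nonneg_left (by norm_num) hA3
          (pow_le_pow_left₀ hapos.le haa' 3)
      · rw [hva']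
    have step1 : |f₀ (x - s) - f₀ x| / f₀ x ≤ (K * s) / (2 / aSeq (d+64)^3) :=
      div_le_div₀ (mul_pos hKpos hspos).le hdelta h2A' flb
    have expand : (K * s) / (2 / aSeq (d+64)^3) = 8*s*aSeq (d+64)^2/aSeq (d+63)^3 := by
      rw [hKdef]; field_simp; ring
    have P3 : 8*s*aSeq (d+64)^2/aSeq (d+63)^3 ≤ 2^16/2^(d+63) := by
      rw [div_le_div_iff₀ hA3 (h2pow (d+63))]
      have ha2 : aSeq (d+64)^2 = (2:ℝ)^(2*(d+64)^2) := aSeq_pow_eq _ 2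
      have ha3 : aSeq (d+63)^3 = (2:ℝ)^(3*(d+63)^2) := aSeq_pow_eq _ 3
      rw [ha2, ha3]
      have hC : (0:ℝ) < 8*(2:ℝ)^(2*(d+64)^2)*2^(d+63) :=
        mul_pos (mul_pos (by norm_num) (h2pow _)) (h2pow _)
      calc 8*s*(2:ℝ)^(2*(d+64)^2)*2^(d+63)
          = (8*(2:ℝ)^(2*(d+64)^2)*2^(d+63)) * s := by ring
        _ ≤ (8*(2:ℝ)^(2*(d+64)^2)*2^(d+63)) * (2:ℝ)^((d+59)^2) :=
            mul_le_mul_of_nonneg_left hs_ub hC.le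
        _ = 2^(3 + (2*(d+64)^2 + ((d+63) + (d+59)^2))) := by
            rw [show (8:ℝ) = 2^3 by norm_num]; simp only [← pow_add]; congr 1; ring
        _ ≤ 2^(16 + 3*(d+63)^2) := two_pow_mono (expo3 d)
        _ = 2^16 * (2:ℝ)^(3*(d+63)^2) := by rw [pow_add]
    have hLinv : (0:ℝ) < 1/L := div_pos one_pos hLpos
    calc |f₀ (x - s) - f₀ x| / f₀ x ≤ (K * s) / (2 / aSeq (d+64)^3) := step1
      _ = 8*s*aSeq (d+64)^2/aSeq (d+63)^3 := expand
      _ ≤ 2^16/2^(d+63) := P3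
      _ ≤ 1/L + 2^16/2^(d+63) := by linarith


theorem pw_density_shift_by_a_m_n_uniform (f₀ : ℝ → ℝ)
    (hf₀ : PWConstruction f₀) (f : ℝ → ℝ) (hf : f = normExt f₀) :
    ∀ ε > (0:ℝ), ∃ N : ℕ, ∀ n : ℕ, N ≤ n →
      ∀ x ∈ Set.Ioc (aSeq n) (aSeq (n + 1)),
        |f (x - aSeq (mIdx n)) / f x - 1| ≤ ε := by
  intro ε hε
  have hIpos : 0 < ∫ y in Set.Ici (0:ℝ), f₀ y := integral_f0_pos f₀ hf₀
  set I := ∫ y in Set.Ici (0:ℝ), f₀ y with hIdef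
  have hIne : I ≠ 0 := ne_of_gt hIpos
  refine ⟨max 63 (max (⌈Real.exp (2/ε)⌉₊ + 1) (⌈2/ε⌉₊ + 17)), ?_⟩
  intro n hn x hx
  obtain ⟨k, rfl⟩ : ∃ k, n = k + 1 := ⟨n - 1, by omega⟩
  have h63 : 63 ≤ k + 1 := le_trans (le_max_left _ _) hn
  have hexpk : ⌈Real.exp (2/ε)⌉₊ + 1 ≤ k + 1 :=
    le_trans (le_trans (le_max_left _ _) (le_max_right _ _)) hn
  have heps17 : ⌈2/ε⌉₊ + 17 ≤ k + 1 :=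
    le_trans (le_trans (le_max_right _ _) (le_max_right _ _)) hn
  have key := key_bound f₀ hf₀ k (by omega) (by rwa [show k+1+1 = k+2 from rfl] at hx)
  -- rewrite f into f₀
  have hxa : aSeq (k+1) < x := hx.1
  have hx0 : (0:ℝ) < x := lt_trans (aSeq_pos _) hxa
  have hsle : aSeq (mIdx (k+1)) ≤ aSeq (k+1) := aSeq_mono (mIdx_le_self (by omega))
  have hxs0 : (0:ℝ) < x - aSeq (mIdx (k+1)) + aSeq (mIdx (k+1)) := by linarith
  have hxs0' : (0:ℝ) ≤ x - aSeq (mIdx (k+1)) := by linarith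
  have hfeq : f (x - aSeq (mIdx (k+1))) / f x = f₀ (x - aSeq (mIdx (k+1))) / f₀ x := by
    rw [hf]
    show (if x - aSeq (mIdx (k+1)) < 0 then 0 else f₀ (x - aSeq (mIdx (k+1))) / I) /
      (if x < 0 then 0 else f₀ x / I) = _
    rw [if_neg (not_lt.mpr hxs0'), if_neg (not_lt.mpr hx0.le)]
    set a := f₀ (x - aSeq (mIdx (k+1)))
    set b := f₀ x
    calc (a/I)/(b/I) = (a/I)*(I/b) := by rw [div_eq_mul_inv (a/I), inv_div]
      _ = (a*I)/(I*b) := div_mul_div_comm a I I b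
      _ = (I*a)/(I*b) := by rw [mul_comm a I]
      _ = a/b := mul_div_mul_left a b hIne
  rw [hfeq]
  refine le_trans key ?_
  -- numeric: 1/log + 2^16/2^(k+1) ≤ ε
  have part1 : 1 / Real.log (((k+1:ℕ):ℝ) + 1) ≤ ε/2 := by
    have h1 : Real.exp (2/ε) ≤ ((k+1:ℕ):ℝ) + 1 := by
      have : Real.exp (2/ε) ≤ (⌈Real.exp (2/ε)⌉₊ : ℝ) := Nat.le_ceil _
      have h2 : ((⌈Real.exp (2/ε)⌉₊ + 1 : ℕ):ℝ) ≤ ((k+1:ℕ):ℝ) := by exact_mod_cast hexpk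
      push_cast at h2 ⊢
      linarith
    have h2 : 2/ε ≤ Real.log (((k+1:ℕ):ℝ) + 1) := by
      rw [← Real.log_exp (2/ε)]
      apply Real.log_le_log (Real.exp_pos _) h1
    have h3 : (0:ℝ) < 2/ε := by positivity
    calc 1 / Real.log (((k+1:ℕ):ℝ) + 1) ≤ 1 / (2/ε) :=
          one_div_le_one_div_of_le h3 h2
      _ = ε/2 := one_div_div 2 ε
  have part2 : (2:ℝ)^16 / 2^(k+1) ≤ ε/2 := by
    have hksub : k + 1 = 16 + (k - 15) := by omega
    have hsplit : (2:ℝ)^(k+1) = 2^16 * 2^(k-15) := by rw [← pow_add, ← hksub]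
    have hpos15 : (0:ℝ) < 2^(k-15) := pow_pos two_pos _
    have he1 : (2:ℝ)^16/2^(k+1) = 1/2^(k-15) := by
      rw [hsplit, ← div_div, div_self (by norm_num : ((2:ℝ)^16) ≠ 0)]
    rw [he1]
    have hk15 : (2:ℝ)/ε ≤ ((k-15:ℕ):ℝ) := by
      have h1 : (2:ℝ)/ε ≤ (⌈2/ε⌉₊ : ℝ) := Nat.le_ceil _
      have h2 : (⌈2/ε⌉₊ : ℕ) + 1 ≤ k - 15 := by omega
      have h3 : ((⌈2/ε⌉₊ : ℕ) : ℝ) + 1 ≤ ((k-15:ℕ):ℝ) := by exact_mod_cast h2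
      linarith
    have h3 : (0:ℝ) < 2/ε := by positivity
    calc (1:ℝ)/2^(k-15) ≤ 1/((k-15:ℕ):ℝ) := by
          apply one_div_le_one_div_of_le (by linarith) (nat_lt_two_pow_real _)
      _ ≤ 1/(2/ε) := one_div_le_one_div_of_le h3 hk15
      _ = ε/2 := one_div_div 2 ε
  linarith
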